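/- For an odd prime N and u coprime to N, every coefficient of the DFT of the Zadoff–Chu sequence has modulus √N: |X_u[k]| = √N for all k, where X_u[k] = Σ_{n=0}^{N-1} exp(-iπ u n(n+1)/N)·exp(-2πi kn/N). -/

import Mathlib

open Complex


noncomputable def zcE (N : ℕ) (m : ℤ) : ℂ :=
  Complex.exp (2 * (Real.pi : ℂ) * Complex.I * m / N)

lemma zcE_add (N : ℕ) (a b : ℤ) : zcE N (a + b) = zcE N a * zcE N b := by
  rw [zcE, zcE, zcE, ← Complex.exp_add]
  congr 1
  push_cast
  ring

lemma zcE_zero (N : ℕ) : zcE N 0 = 1 := by simp [zcE]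

lemma zcE_natCast_mul (N : ℕ) (hN : N ≠ 0) (t : ℤ) : zcE N ((N : ℤ) * t) = 1 := by
  have hNC : (N : ℂ) ≠ 0 := Nat.cast_ne_zero.mpr hN
  rw [zcE]
  have h2 : 2 * (Real.pi : ℂ) * Complex.I * (((N : ℤ) * t : ℤ) : ℂ) / N
      = (t : ℂ) * (2 * Real.pi * Complex.I) := by
    push_cast
    field_simp
  rw [h2, Complex.exp_int_mul_two_pi_mul_I]

lemma zcE_eq_of_dvd (N : ℕ) (hN : N ≠ 0) (a b : ℤ) (h : (N : ℤ) ∣ a - b) :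
    zcE N a = zcE N b := by
  obtain ⟨t, ht⟩ := h
  have : a = b + (N : ℤ) * t := by linarith
  rw [this, zcE_add, zcE_natCast_mul N hN, mul_one]

lemma zcE_pow (N : ℕ) (a : ℤ) (n : ℕ) : zcE N (a * n) = (zcE N a) ^ n := by
  induction n with
  | zero => simpa using zcE_zero N
  | succ n ih =>
      have h : a * ((n : ℕ) + 1 : ℕ) = a * n + a := by push_cast; ring
      rw [h, zcE_add, ih, pow_succ]

lemma zcE_conj (N : ℕ) (m : ℤ) : (starRingEnd ℂ) (zcE N m) = zcE N (-m) := by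
  rw [zcE, zcE, ← Complex.exp_conj]
  congr 1
  have h2 : (starRingEnd ℂ) 2 = 2 := by
    simp [Complex.ext_iff]
  simp [map_div₀, Complex.conj_I, h2]

lemma zcE_ne_one (N : ℕ) (hN : 0 < N) (a : ℤ) (h : ¬ (N : ℤ) ∣ a) : zcE N a ≠ 1 := by
  intro heq
  apply h
  rw [zcE, Complex.exp_eq_one_iff] at heq
  obtain ⟨n, hn⟩ := heq
  have hNC : (N : ℂ) ≠ 0 := Nat.cast_ne_zero.mpr hN.ne'
  have hpi : (Real.pi : ℂ) ≠ 0 := Complex.ofReal_ne_zero.mpr Real.pi_ne_zero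
  have hI : Complex.I ≠ 0 := Complex.I_ne_zero
  have hc : (a : ℂ) = (n : ℂ) * N := by
    field_simp at hn
    have h2 : (2 : ℂ) * Real.pi * Complex.I * a = 2 * Real.pi * Complex.I * (n * N) := by
      rw [hn]; ring
    exact mul_left_cancel₀ (by simp [hpi, hI] : (2 : ℂ) * Real.pi * Complex.I ≠ 0) h2
  have : a = n * N := by exact_mod_cast hc
  exact ⟨n, by linarith⟩

lemma zcE_sum (N : ℕ) (hN : 0 < N) (a : ℤ) :
    ∑ n ∈ Finset.range N, zcE N (a * n) = if (N : ℤ) ∣ a then (N : ℂ) else 0 := by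
  split_ifs with h
  · obtain ⟨t, rfl⟩ := h
    have hone : ∀ n ∈ Finset.range N, zcE N ((N : ℤ) * t * n) = 1 := by
      intro n _
      rw [mul_assoc, zcE_natCast_mul N hN.ne']
    rw [Finset.sum_congr rfl hone]
    simp
  · have hz : zcE N a ≠ 1 := zcE_ne_one N hN a h
    have : ∑ n ∈ Finset.range N, zcE N (a * n) = ∑ n ∈ Finset.range N, (zcE N a) ^ n := by
      exact Finset.sum_congr rfl fun n _ => zcE_pow N a n
    rw [this, geom_sum_eq hz]
    have hNpow : (zcE N a) ^ N = 1 := by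
      rw [← zcE_pow, mul_comm, zcE_natCast_mul N hN.ne']
    rw [hNpow]
    simp

/-- Every DFT coefficient of a Zadoff–Chu sequence of odd prime length has modulus `√N`. -/
theorem zc_dft_abs (N : ℕ) (hN : N.Prime) (hodd : Odd N) (u : ℤ)
    (hu1 : 1 ≤ u) (hu2 : u ≤ (N : ℤ) - 1) (k : ℤ) :
    ‖∑ n ∈ Finset.range N,
        Complex.exp (-((Real.pi : ℂ) * u * (n : ℂ) * ((n : ℂ) + 1) / N) * Complex.I)
          * Complex.exp (-(2 * (Real.pi : ℂ) * Complex.I * k * n / N))‖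
      = Real.sqrt N := by
  have hNpos : 0 < N := hN.pos
  have hN0 : N ≠ 0 := hNpos.ne'
  have hNC : (N : ℂ) ≠ 0 := Nat.cast_ne_zero.mpr hN0
  have hp : Prime (N : ℤ) := Nat.prime_iff_prime_int.mp hN
  set c : ℕ → ℤ := fun n => ((n * (n + 1) / 2 : ℕ) : ℤ) with hc
  set g : ℕ → ℤ := fun n => -(u * c n + k * n) with hg
  have h2c : ∀ n : ℕ, 2 * c n = (n : ℤ) * (n + 1) := by
    intro n
    have he : 2 * (n * (n + 1) / 2) = n * (n + 1) :=
      Nat.two_mul_div_two_of_even (Nat.even_mul_succ_self n)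
    simp only [hc]
    exact_mod_cast he
  -- step 1 : rewrite terms
  have hterm : ∀ n : ℕ,
      Complex.exp (-((Real.pi : ℂ) * u * (n : ℂ) * ((n : ℂ) + 1) / N) * Complex.I)
        * Complex.exp (-(2 * (Real.pi : ℂ) * Complex.I * k * n / N))
      = zcE N (g n) := by
    intro n
    rw [zcE, ← Complex.exp_add]
    congr 1
    have h2C : ((c n : ℂ)) * 2 = (n : ℂ) * ((n : ℂ) + 1) := by
      exact_mod_cast congrArg (fun z : ℤ => (z : ℂ)) ((mul_comm (2:ℤ) (c n)) ▸ h2c n)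
    have hgn : ((g n : ℤ) : ℂ) = -(u * (c n : ℂ) + k * n) := by
      simp [hg]
    rw [hgn]
    field_simp
    linear_combination (u : ℂ) * h2C
  rw [Finset.sum_congr rfl (fun n _ => hterm n)]
  set S : ℂ := ∑ n ∈ Finset.range N, zcE N (g n) with hS
  -- step 2 : g respects mod N
  have gmod : ∀ a b : ℕ, a % N = b % N → (N : ℤ) ∣ g a - g b := by
    intro a b hab
    have hd : (N : ℤ) ∣ (b : ℤ) - a := Nat.modEq_iff_dvd.mp hab
    have h2g : 2 * (g a - g b) = ((b : ℤ) - a) * (u * ((a : ℤ) + b + 1) + 2 * k) := by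
      have ha := h2c a
      have hb := h2c b
      simp only [hg]
      linear_combination (-u) * ha + u * hb
    have hdvd2 : (N : ℤ) ∣ 2 * (g a - g b) := h2g ▸ hd.mul_right _
    rcases hp.dvd_mul.mp hdvd2 with h2 | h
    · exfalso
      have : (N : ℤ) ∣ ((2 : ℕ) : ℤ) := by exact_mod_cast h2
      have hN2 : N ∣ 2 := Int.ofNat_dvd.mp this
      have : N = 2 := (Nat.prime_dvd_prime_iff_eq hN Nat.prime_two).mp hN2
      rw [this] at hodd
      exact (Nat.not_odd_iff_even.mpr (by norm_num)) hodd
    · exact h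
  -- step 3 : shift identity
  have gshift : ∀ n m : ℕ, g n - g (n + m) = (u * c m + k * m) + (u * m) * n := by
    intro n m
    have h := h2c (n + m)
    have h1 := h2c n
    have h2 := h2c m
    have h4 : 2 * (g n - g (n + m)) = 2 * ((u * c m + k * m) + (u * m) * n) := by
      simp only [hg]
      push_cast at h ⊢
      linear_combination (-u) * h1 + u * h + (-u) * h2
    linarith
  -- step 4 : key identity S * conj S = N
  have hnu : ¬ (N : ℤ) ∣ u := by
    intro hdv
    have := Int.le_of_dvd (by linarith) hdv
    linarith
  have key : S * (starRingEnd ℂ) S = (N : ℂ) := by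
    have hconj : (starRingEnd ℂ) S = ∑ m ∈ Finset.range N, zcE N (-(g m)) := by
      rw [hS, map_sum]
      exact Finset.sum_congr rfl fun m _ => zcE_conj N (g m)
    rw [hconj, hS, Finset.sum_mul_sum]
    have step1 : ∀ n ∈ Finset.range N,
        ∑ m ∈ Finset.range N, zcE N (g n) * zcE N (-(g m))
          = ∑ m ∈ Finset.range N, zcE N ((u * c m + k * m) + (u * m) * n) := by
      intro n hn
      have e1 : ∀ m ∈ Finset.range N,
          zcE N (g n) * zcE N (-(g m)) = zcE N (g n - g m) := by
        intro m _
        rw [← zcE_add, sub_eq_add_neg]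
      rw [Finset.sum_congr rfl e1]
      have e2 : ∑ m ∈ Finset.range N, zcE N (g n - g ((n + m) % N))
          = ∑ m ∈ Finset.range N, zcE N (g n - g m) := by
        apply Finset.sum_nbij' (i := fun m => (n + m) % N) (j := fun m => (m + (N - n)) % N)
        · intro a ha
          exact Finset.mem_range.mpr (Nat.mod_lt _ hNpos)
        · intro a ha
          exact Finset.mem_range.mpr (Nat.mod_lt _ hNpos)
        · intro a ha
          simp only [Finset.mem_range] at ha
          have hnN : n < N := Finset.mem_range.mp hn
          rw [Nat.mod_add_mod]
          have he : n + a + (N - n) = a + N := by omega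
          rw [he, Nat.add_mod_right, Nat.mod_eq_of_lt ha]
        · intro a ha
          simp only [Finset.mem_range] at ha
          have hnN : n < N := Finset.mem_range.mp hn
          rw [Nat.add_mod_mod]
          have he : n + (a + (N - n)) = a + N := by omega
          rw [he, Nat.add_mod_right, Nat.mod_eq_of_lt ha]
        · intro a ha
          rfl
      rw [← e2]
      apply Finset.sum_congr rfl
      intro m _
      have hmodeq : (n + m) % N = ((n + m) % N) % N := (Nat.mod_mod_of_dvd _ dvd_rfl).symm
      have hdvd : (N : ℤ) ∣ (g n - g ((n + m) % N)) - (g n - g (n + m)) := by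
        have := gmod (n + m) ((n + m) % N) hmodeq
        have heq : (g n - g ((n + m) % N)) - (g n - g (n + m))
            = g (n + m) - g ((n + m) % N) := by ring
        rw [heq]
        exact this
      rw [zcE_eq_of_dvd N hN0 _ _ hdvd, gshift n m]
    rw [Finset.sum_congr rfl step1, Finset.sum_comm]
    have step2 : ∀ m ∈ Finset.range N,
        ∑ n ∈ Finset.range N, zcE N ((u * c m + k * m) + (u * m) * n)
          = zcE N (u * c m + k * m) * (if (N : ℤ) ∣ u * m then (N : ℂ) else 0) := by
      intro m _
      rw [← zcE_sum N hNpos (u * m), Finset.mul_sum]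
      exact Finset.sum_congr rfl fun n _ => zcE_add N _ _
    rw [Finset.sum_congr rfl step2]
    rw [Finset.sum_eq_single 0]
    · have hc0 : c 0 = 0 := by simp [hc]
      simp [hc0, zcE_zero]
    · intro m hm hm0
      have hmN : m < N := Finset.mem_range.mp hm
      have hnm : ¬ (N : ℤ) ∣ u * m := by
        intro hdv
        rcases hp.dvd_mul.mp hdv with h | h
        · exact hnu h
        · have := Int.le_of_dvd (by exact_mod_cast Nat.pos_of_ne_zero hm0) h
          have : (N : ℤ) ≤ m := this
          have : (m : ℤ) < N := by exact_mod_cast hmN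
          omega
      simp [hnm]
    · intro h0
      exact absurd (Finset.mem_range.mpr hNpos) h0
  -- step 5 : conclude
  have hns : Complex.normSq S = (N : ℝ) := by
    have hm := Complex.mul_conj S
    rw [key] at hm
    exact_mod_cast hm.symm
  rw [Complex.norm_def, hns]
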